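/- Let G be a locally compact Hausdorff topological group and n ∈ ℕ. Then the diagonal right action map E_n G × G → E_n G, ([g,t], h) ↦ [(i ↦ g i · h), t], is continuous, where E_n G carries the quotient topology and E_n G × G the product topology. -/

import Mathlib

open Set

/-- The Milnor relation on `(Fin (n+1) → G) × Δⁿ`:
`(g,t) ~ (g',t')` iff `t = t'` and `g i = g' i` whenever `t i ≠ 0`. -/
abbrev milnorRel (n : ℕ) (G : Type*) :
    (Fin (n + 1) → G) × stdSimplex ℝ (Fin (n + 1)) →
      (Fin (n + 1) → G) × stdSimplex ℝ (Fin (n + 1)) → Prop := fun p q =>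
  p.2 = q.2 ∧ ∀ i, (p.2 : Fin (n + 1) → ℝ) i ≠ 0 → p.1 i = q.1 i

/-- The truncated Milnor space `Eₙ G` with the quotient topology. -/
abbrev MilnorE (n : ℕ) (G : Type*) := Quot (milnorRel n G)

variable (G : Type*) [Group G] [TopologicalSpace G] [IsTopologicalGroup G] [T2Space G]
  [LocallyCompactSpace G]

/-- The diagonal right action `Eₙ G × G → Eₙ G`,
`([g,t], h) ↦ [(i ↦ g i · h), t]`. -/
def milnorAct (n : ℕ) : MilnorE n G × G → MilnorE n G := fun p =>
  Quot.lift
    (fun x : (Fin (n + 1) → G) × stdSimplex ℝ (Fin (n + 1)) =>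
      Quot.mk (milnorRel n G) (fun i => x.1 i * p.2, x.2))
    (fun a b h => Quot.sound ⟨h.1, fun i hi => by simp only at hi ⊢; rw [h.2 i hi]⟩)
    p.1

/-- For a locally compact Hausdorff topological group `G`, the diagonal right
action of `G` on the quotient-topologized truncated Milnor space `Eₙ G` is
continuous. -/
theorem milnorAct_continuous_of_locallyCompact (n : ℕ) :
    Continuous (milnorAct G n) := by
  -- the uncurried map on the total space, as a continuous map
  have hcont : Continuous (fun p : ((Fin (n + 1) → G) × stdSimplex ℝ (Fin (n + 1))) × G =>
      Quot.mk (milnorRel n G) (fun i => p.1.1 i * p.2, p.1.2)) := by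
    apply continuous_quot_mk.comp
    apply Continuous.prodMk
    · exact continuous_pi fun i =>
        ((continuous_apply i).comp (continuous_fst.comp continuous_fst)).mul continuous_snd
    · exact continuous_snd.comp continuous_fst
  -- curried map into C(G, MilnorE n G)
  let Φ : (Fin (n + 1) → G) × stdSimplex ℝ (Fin (n + 1)) → C(G, MilnorE n G) := fun x =>
    ⟨fun h => Quot.mk (milnorRel n G) (fun i => x.1 i * h, x.2),
      hcont.comp (Continuous.prodMk continuous_const continuous_id)⟩
  have hΦ : Continuous Φ :=
    ContinuousMap.continuous_of_continuous_uncurry Φ hcont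
  have hΦrel : ∀ a b, milnorRel n G a b → Φ a = Φ b := by
    intro a b h
    ext hG
    exact Quot.sound ⟨h.1, fun i hi => by simp only; rw [h.2 i hi]⟩
  let F : MilnorE n G → C(G, MilnorE n G) := Quot.lift Φ hΦrel
  have hF : Continuous F := by
    rw [(isQuotientMap_quot_mk (r := milnorRel n G)).continuous_iff]
    exact hΦ
  have key := ContinuousMap.continuous_uncurry_of_continuous (⟨F, hF⟩ : C(MilnorE n G, C(G, MilnorE n G)))
  convert key using 1
  ext ⟨e, h⟩
  induction e using Quot.ind
  simp [milnorAct, Function.uncurry, F, Φ]
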